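/- Let K ∈ ℂ with Re K ≥ 0, and let P solve P'(τ) = -(K/2)|P(τ)|²P(τ) with P(0)=P₀. Then for all τ ≥ 0, |P(τ)| ≤ |P₀| / sqrt(1 + (Re K)|P₀|²τ). In particular |P(τ)| ≤ |P₀| for all τ ≥ 0. -/

import Mathlib

open Set

private lemma normSq_hasDerivAt' {P : ℝ → ℂ} {v : ℂ} {τ : ℝ} (h : HasDerivAt P v τ) :
    HasDerivAt (fun t => ‖P t‖ ^ 2) (2 * (v * (starRingEnd ℂ) (P τ)).re) τ := by
  have hre : HasDerivAt (fun t => (P t).re) v.re τ :=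
    Complex.reCLM.hasFDerivAt.comp_hasDerivAt τ h
  have him : HasDerivAt (fun t => (P t).im) v.im τ :=
    Complex.imCLM.hasFDerivAt.comp_hasDerivAt τ h
  have h2 : HasDerivAt (fun t => (P t).re ^ 2 + (P t).im ^ 2)
      ((2 : ℕ) * (P τ).re ^ 1 * v.re + (2 : ℕ) * (P τ).im ^ 1 * v.im) τ :=
    (hre.pow 2).add (him.pow 2)
  have hfun : (fun t => ‖P t‖ ^ 2) = fun t => (P t).re ^ 2 + (P t).im ^ 2 := by
    funext t
    rw [Complex.sq_norm, Complex.normSq_apply]; ring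
  rw [hfun]
  convert h2 using 1
  simp [Complex.mul_re, Complex.conj_re, Complex.conj_im]
  ring

/-- decay bound for solutions of P' = -(K/2)|P|²P with Re K ≥ 0. -/
theorem cubic_ode_decay_bound
    (K P₀ : ℂ) (hK : 0 ≤ K.re) (P : ℝ → ℂ)
    (hode : ∀ τ : ℝ, 0 ≤ τ →
      HasDerivAt P (-(K/2) * (‖P τ‖^2 : ℝ) * P τ) τ)
    (hinit : P 0 = P₀) :
    (∀ τ : ℝ, 0 ≤ τ →
      ‖P τ‖ ≤ ‖P₀‖ / Real.sqrt (1 + K.re * ‖P₀‖^2 * τ)) ∧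
    (∀ τ : ℝ, 0 ≤ τ → ‖P τ‖ ≤ ‖P₀‖) := by
  have hy0eq : ‖P 0‖ ^ 2 = ‖P₀‖ ^ 2 := by rw [hinit]
  have hynn : ∀ t : ℝ, (0:ℝ) ≤ ‖P t‖ ^ 2 := fun t => sq_nonneg _
  -- derivative of y = ‖P‖²
  have hdy : ∀ τ : ℝ, 0 ≤ τ →
      HasDerivAt (fun t => ‖P t‖ ^ 2) (-K.re * (‖P τ‖ ^ 2) ^ 2) τ := by
    intro τ hτ
    have h := normSq_hasDerivAt' (hode τ hτ)
    convert h using 1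
    have h3 : (-(K/2) * ((‖P τ‖^2 : ℝ) : ℂ) * P τ * (starRingEnd ℂ) (P τ)) =
        (((-(1/2) * (‖P τ‖^2 * ‖P τ‖^2)) : ℝ) : ℂ) * K := by
      rw [mul_assoc, Complex.mul_conj']
      push_cast [Complex.normSq_eq_norm_sq]
      ring
    rw [h3, Complex.re_ofReal_mul]
    ring
  -- y is antitone on [0, ∞)
  have hcont : ContinuousOn (fun t => ‖P t‖ ^ 2) (Ici 0) :=
    fun x hx => ((hdy x hx).continuousAt).continuousWithinAt
  have hanti : AntitoneOn (fun t => ‖P t‖ ^ 2) (Ici 0) := by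
    apply antitoneOn_of_deriv_nonpos (convex_Ici 0) hcont
    · intro x hx
      rw [interior_Ici] at hx
      exact ((hdy x hx.le).differentiableAt).differentiableWithinAt
    · intro x hx
      rw [interior_Ici] at hx
      rw [(hdy x hx.le).deriv]
      have := mul_nonneg hK (sq_nonneg (‖P x‖ ^ 2))
      linarith
  have hyle : ∀ τ : ℝ, 0 ≤ τ → ‖P τ‖ ^ 2 ≤ ‖P₀‖ ^ 2 := by
    intro τ hτ
    calc ‖P τ‖ ^ 2 ≤ ‖P 0‖ ^ 2 := hanti (Set.mem_Ici.2 le_rfl) (Set.mem_Ici.2 hτ) hτ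
    _ = ‖P₀‖ ^ 2 := hy0eq
  -- g τ = y τ * (1 + a y₀ τ) - y₀ satisfies g' = -a y g, g 0 = 0 ⇒ g ≡ 0
  set a := K.re with ha
  set y0 : ℝ := ‖P₀‖ ^ 2 with hy0
  set g : ℝ → ℝ := fun t => ‖P t‖ ^ 2 * (1 + a * y0 * t) - y0 with hg
  have hdg : ∀ τ : ℝ, 0 ≤ τ → HasDerivAt g (-a * ‖P τ‖ ^ 2 * g τ) τ := by
    intro τ hτ
    have h1 : HasDerivAt (fun t : ℝ => 1 + a * y0 * t) (a * y0) τ := by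
      simpa using ((hasDerivAt_id τ).const_mul (a * y0)).const_add 1
    have h2 := ((hdy τ hτ).mul h1).sub_const y0
    refine h2.congr_deriv ?_
    simp only [hg]
    ring
  have hg0 : ∀ τ : ℝ, 0 ≤ τ → g τ = 0 := by
    intro T hT
    have key := norm_le_gronwallBound_of_norm_deriv_right_le (a := 0) (b := T)
      (f := g) (f' := fun x => -a * ‖P x‖ ^ 2 * g x) (δ := 0) (K := a * y0) (ε := 0)
      (fun x hx => ((hdg x hx.1).continuousAt).continuousWithinAt)
      (fun x hx => (hdg x hx.1).hasDerivWithinAt)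
      (by simp [hg, hinit, hy0])
      ?_ T ⟨hT, le_refl T⟩
    · rw [gronwallBound_ε0_δ0] at key
      simpa using key
    · intro x hx
      rw [add_zero]
      have h1 : ‖-a * ‖P x‖ ^ 2 * g x‖ = a * ‖P x‖ ^ 2 * ‖g x‖ := by
        rw [norm_mul, Real.norm_eq_abs (-a * ‖P x‖ ^ 2),
          abs_of_nonpos (by nlinarith [hynn x] : -a * ‖P x‖ ^ 2 ≤ 0)]
        ring_nf
      rw [h1]
      exact mul_le_mul_of_nonneg_right
        (mul_le_mul_of_nonneg_left (hyle x hx.1) hK) (norm_nonneg _)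
  -- conclude
  have hmain : ∀ τ : ℝ, 0 ≤ τ →
      ‖P τ‖ = ‖P₀‖ / Real.sqrt (1 + a * y0 * τ) := by
    intro τ hτ
    have hy0nn : (0:ℝ) ≤ y0 := hy0 ▸ sq_nonneg _
    have hc : (0:ℝ) < 1 + a * y0 * τ := by nlinarith [mul_nonneg (mul_nonneg hK hy0nn) hτ]
    have heq : ‖P τ‖ ^ 2 = y0 / (1 + a * y0 * τ) := by
      have h := hg0 τ hτ
      simp only [hg] at h
      rw [eq_div_iff (ne_of_gt hc)]
      linarith
    have : ‖P τ‖ = Real.sqrt (y0 / (1 + a * y0 * τ)) := by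
      rw [← heq, Real.sqrt_sq (norm_nonneg _)]
    rw [this, Real.sqrt_div hy0nn, hy0, Real.sqrt_sq (norm_nonneg _)]
  constructor
  · intro τ hτ
    exact le_of_eq (hmain τ hτ)
  · intro τ hτ
    have h := hyle τ hτ
    have := Real.sqrt_le_sqrt h
    rwa [Real.sqrt_sq (norm_nonneg _), Real.sqrt_sq (norm_nonneg _)] at this
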